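/- Let k ≥ 2 be an integer, α ∈ (1 − 1/k, 1), and let g : ℝ → ℂ be measurable with |g(x)| ≤ C/(1 + |x|) for all x ∈ ℝ, for some constant C > 0. Then for every fixed index j ∈ {1, …, k}, ∫_{ℝ^k} |g(x₁ + … + x_k)|² · ∏_{i ≠ j} (1 + |x_i|^α)^{−k/(k−1)} dx₁ … dx_k < ∞. -/

import Mathlib

open MeasureTheory Filter Set
open scoped ENNReal

private lemma lintegral_fin_prod {n : ℕ} (φ : Fin n → ℝ → ℝ≥0∞) (hφ : ∀ i, Measurable (φ i)) :
    ∫⁻ x : Fin n → ℝ, ∏ i, φ i (x i) = ∏ i, ∫⁻ t, φ i t := by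
  induction n with
  | zero => simp [lintegral_const, volume_pi]
  | succ n ih =>
    have hF : Measurable fun x : Fin (n+1) → ℝ => ∏ i, φ i (x i) :=
      Finset.measurable_prod _ fun i _ => (hφ i).comp (measurable_pi_apply i)
    have h := (measurePreserving_piFinSuccAbove (fun _ : Fin (n+1) => (volume : Measure ℝ)) 0).symm
    rw [volume_pi, ← h.lintegral_comp hF]
    have key : ∀ z : ℝ × (Fin n → ℝ),
        ∏ i, φ i ((MeasurableEquiv.piFinSuccAbove (fun _ : Fin (n+1) => ℝ) 0).symm z i)
          = φ 0 z.1 * ∏ i : Fin n, φ i.succ (z.2 i) := by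
      intro z
      rw [Fin.prod_univ_succ]
      simp [MeasurableEquiv.piFinSuccAbove_symm_apply, Fin.insertNthEquiv, Fin.insertNth_zero]
    simp_rw [key]
    rw [lintegral_prod_mul (f := φ 0) (g := fun y : Fin n → ℝ => ∏ i, φ i.succ (y i))
      (hφ 0).aemeasurable
      (Finset.measurable_prod _ fun i _ =>
        ((hφ i.succ).comp (measurable_pi_apply i))).aemeasurable]
    rw [← volume_pi, ih (fun i => φ i.succ) (fun i => hφ i.succ), Fin.prod_univ_succ]

private lemma det_aux {k : ℕ} (j : Fin k) :
    (Matrix.of fun i i' : Fin k =>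
      if i = j then (if i' = j then (1:ℝ) else -1) else if i = i' then 1 else 0).det = 1 := by
  classical
  have key : ∀ s : Finset (Fin k), j ∉ s →
      (Matrix.updateRow (1 : Matrix (Fin k) (Fin k) ℝ) j
        (fun c => if c = j then 1 else if c ∈ s then -1 else 0)).det = 1 := by
    intro s
    induction s using Finset.induction_on with
    | empty =>
      intro _
      have hrow : (fun c : Fin k => if c = j then (1:ℝ) else if c ∈ (∅ : Finset (Fin k)) then -1 else 0)
          = (1 : Matrix (Fin k) (Fin k) ℝ) j := by
        funext c
        by_cases h : c = j
        · simp [h, Matrix.one_apply]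
        · simp [h, Matrix.one_apply, Ne.symm h]
      rw [hrow, Matrix.updateRow_eq_self, Matrix.det_one]
    | @insert a s ha ih =>
      intro hj
      have haj : a ≠ j := fun h => hj (by simp [h])
      have hjs : j ∉ s := fun h => hj (Finset.mem_insert_of_mem h)
      set A := Matrix.updateRow (1 : Matrix (Fin k) (Fin k) ℝ) j
        (fun c => if c = j then (1:ℝ) else if c ∈ s then -1 else 0) with hA
      have hupd : Matrix.updateRow (1 : Matrix (Fin k) (Fin k) ℝ) j
          (fun c => if c = j then (1:ℝ) else if c ∈ insert a s then -1 else 0)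
          = Matrix.updateRow A j (A j + ((-1 : ℝ)) • A a) := by
        ext r c
        by_cases hrj : r = j
        · rw [hrj, Matrix.updateRow_self, Matrix.updateRow_self]
          simp only [Pi.add_apply, Pi.smul_apply, smul_eq_mul, hA,
            Matrix.updateRow_self, Matrix.updateRow_ne haj, Matrix.one_apply]
          by_cases hcj : c = j
          · simp [hcj, haj]
          · by_cases hca : c = a
            · simp [hcj, hca, ha, haj]
            · simp [hcj, hca, Ne.symm hca, Finset.mem_insert]
        · rw [Matrix.updateRow_ne hrj, Matrix.updateRow_ne hrj, hA, Matrix.updateRow_ne hrj]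
      rw [hupd]
      exact (Matrix.det_updateRow_add_smul_self A (Ne.symm haj) (-1)).trans (ih hjs)
  have hM : (Matrix.of fun i i' : Fin k =>
      if i = j then (if i' = j then (1:ℝ) else -1) else if i = i' then 1 else 0)
      = Matrix.updateRow (1 : Matrix (Fin k) (Fin k) ℝ) j
        (fun c => if c = j then 1 else if c ∈ Finset.univ.erase j then -1 else 0) := by
    ext r c
    by_cases hrj : r = j
    · rw [hrj, Matrix.updateRow_self]
      by_cases hcj : c = j <;> simp [hcj, Finset.mem_erase]
    · rw [Matrix.updateRow_ne hrj]
      simp [Matrix.one_apply, hrj]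
  rw [hM]
  exact key _ (by simp)

private lemma one_add_rpow_le {α s : ℝ} (hs : 0 ≤ s) (h0 : 0 ≤ α) (h1 : α ≤ 1) :
    (1 + s) ^ α ≤ 1 + s ^ α := by
  have h := NNReal.rpow_add_le_add_rpow 1 s.toNNReal h0 h1
  have h' := (NNReal.coe_le_coe).mpr h
  simpa [NNReal.coe_rpow, Real.coe_toNNReal s hs] using h'

private lemma integrable_aux {α p : ℝ} (h0 : 0 < α) (h1 : α ≤ 1) (hp : 0 < p)
    (hαp : 1 < α * p) : Integrable (fun t : ℝ => (1 + |t| ^ α) ^ (-p)) := by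
  have hcont : Continuous fun t : ℝ => (1 + |t| ^ α) ^ (-p) := by
    have hbase : Continuous fun t : ℝ => 1 + |t| ^ α :=
      continuous_const.add (continuous_abs.rpow_const fun x => Or.inr h0.le)
    exact hbase.rpow_const fun t => Or.inl (by positivity)
  have hb : Integrable (fun t : ℝ => (1 + ‖t‖) ^ (-(α * p))) :=
    integrable_one_add_norm (by simpa using hαp)
  refine hb.mono hcont.aestronglyMeasurable (ae_of_all _ fun t => ?_)
  have h1t : (0:ℝ) < 1 + |t| := by positivity
  have key : (1 + |t| ^ α) ^ (-p) ≤ (1 + |t|) ^ (-(α * p)) := by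
    have e1 : ((1 + |t|) ^ α) ^ (-p) = (1 + |t|) ^ (-(α * p)) := by
      rw [← Real.rpow_mul h1t.le, mul_neg]
    rw [← e1]
    exact Real.rpow_le_rpow_of_nonpos (Real.rpow_pos_of_pos h1t α)
      (one_add_rpow_le (abs_nonneg t) h0.le h1) (neg_nonpos.mpr hp.le)
  rw [Real.norm_eq_abs, Real.norm_eq_abs, abs_of_nonneg (Real.rpow_nonneg (by positivity) _),
    abs_of_nonneg (Real.rpow_nonneg (by positivity) _)]
  simpa using key

private lemma integrable_gbound (C : ℝ) : Integrable (fun t : ℝ => C ^ 2 * (1 + ‖t‖) ^ (-(2:ℝ))) :=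
  (integrable_one_add_norm (by norm_num)).const_mul _

theorem stmt9 (k : ℕ) (hk : 2 ≤ k) (α : ℝ) (hα : α ∈ Set.Ioo (1 - 1 / (k : ℝ)) 1)
    (g : ℝ → ℂ) (hg : Measurable g) (C : ℝ) (hC : 0 < C)
    (hgb : ∀ x : ℝ, ‖g x‖ ≤ C / (1 + |x|)) (j : Fin k) :
    ∫⁻ x : Fin k → ℝ,
      ENNReal.ofReal
        (‖g (∑ i, x i)‖ ^ 2 *
          ∏ i ∈ Finset.univ.erase j, (1 + |x i| ^ α) ^ (-((k : ℝ) / ((k : ℝ) - 1)))) < ⊤ := by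
  classical
  obtain ⟨hα1, hα2⟩ := hα
  have hk2 : (2:ℝ) ≤ (k:ℝ) := by exact_mod_cast hk
  have hk1 : (1:ℝ) < (k:ℝ) := by linarith
  have hk0 : (0:ℝ) < (k:ℝ) - 1 := by linarith
  set p : ℝ := (k:ℝ) / ((k:ℝ) - 1) with hpdef
  have hp : 0 < p := div_pos (by linarith) hk0
  have h1k : 1 / (k:ℝ) < 1 := by
    rw [div_lt_one (by linarith)]; exact hk1
  have hα0 : 0 < α := lt_trans (by linarith) hα1
  have hαp : 1 < α * p := by
    have hkne : (k:ℝ) ≠ 0 := by linarith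
    have hk1ne : (k:ℝ) - 1 ≠ 0 := hk0.ne'
    have h2 : (1 - 1/(k:ℝ)) * p = 1 := by
      rw [hpdef]; field_simp
    calc (1:ℝ) = (1 - 1/(k:ℝ)) * p := h2.symm
      _ < α * p := mul_lt_mul_of_pos_right hα1 hp
  set h : ℝ → ℝ := fun t => (1 + |t| ^ α) ^ (-p) with hhdef
  have h_cont : Continuous h :=
    (continuous_const.add (continuous_abs.rpow_const fun x => Or.inr hα0.le)).rpow_const
      fun t => Or.inl (ne_of_gt (add_pos_of_pos_of_nonneg one_pos (Real.rpow_nonneg (abs_nonneg t) α)))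
  have h_int : Integrable h := integrable_aux hα0 hα2.le hp hαp
  set φ : Fin k → ℝ → ℝ≥0∞ := fun i t =>
    if i = j then ENNReal.ofReal (‖g t‖ ^ 2) else ENNReal.ofReal (h t) with hφdef
  have hφ : ∀ i, Measurable (φ i) := by
    intro i
    rw [hφdef]
    dsimp only
    split_ifs
    · exact (hg.norm.pow_const 2).ennreal_ofReal
    · exact h_cont.measurable.ennreal_ofReal
  set M : Matrix (Fin k) (Fin k) ℝ := Matrix.of fun i i' =>
    if i = j then (if i' = j then (1:ℝ) else -1) else if i = i' then 1 else 0 with hMdef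
  set L := Matrix.toLin' M with hLdef
  have hdet : LinearMap.det L = 1 := by
    rw [hLdef, LinearMap.det_toLin']
    exact det_aux j
  have hmap : Measure.map L volume = volume := by
    rw [Real.map_linearMap_volume_pi_eq_smul_volume_pi (by rw [hdet]; norm_num), hdet]
    norm_num
  have hLcont : Continuous L := LinearMap.continuous_on_pi _
  have hLapp : ∀ (y : Fin k → ℝ) (i : Fin k), L y i =
      if i = j then y j - ∑ i' ∈ Finset.univ.erase j, y i' else y i := by
    intro y i
    rw [hLdef, Matrix.toLin'_apply]
    show M.mulVec y i = _
    rw [Matrix.mulVec, dotProduct]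
    by_cases hij : i = j
    · rw [if_pos hij, hij]
      simp only [hMdef, Matrix.of_apply, eq_self_iff_true, if_true]
      rw [← Finset.add_sum_erase _ (fun i' => (if i' = j then (1:ℝ) else -1) * y i')
        (Finset.mem_univ j)]
      rw [if_pos rfl, one_mul, sub_eq_add_neg]
      congr 1
      rw [← Finset.sum_neg_distrib]
      exact Finset.sum_congr rfl fun i' hi' => by
        rw [if_neg (Finset.mem_erase.mp hi').1, neg_one_mul]
    · rw [if_neg hij]
      simp only [hMdef, Matrix.of_apply, if_neg hij]
      simp [ite_mul, Finset.sum_ite_eq]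
  have hLsum : ∀ y : Fin k → ℝ, ∑ i, L y i = y j := by
    intro y
    rw [← Finset.add_sum_erase _ (fun i => L y i) (Finset.mem_univ j)]
    rw [hLapp y j, if_pos rfl]
    have e : ∑ i ∈ Finset.univ.erase j, L y i = ∑ i ∈ Finset.univ.erase j, y i :=
      Finset.sum_congr rfl fun i hi => by rw [hLapp, if_neg (Finset.mem_erase.mp hi).1]
    rw [e]
    ring
  have hF : Measurable fun x : Fin k → ℝ => ENNReal.ofReal
      (‖g (∑ i, x i)‖ ^ 2 * ∏ i ∈ Finset.univ.erase j, (1 + |x i| ^ α) ^ (-p)) := by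
    apply Measurable.ennreal_ofReal
    apply Measurable.mul
    · have hsum : Measurable fun x : Fin k → ℝ => ∑ i, x i :=
        Finset.measurable_sum _ fun i _ => measurable_pi_apply i
      exact ((hg.comp hsum).norm).pow_const 2
    · exact Finset.measurable_prod _ fun i _ =>
        (h_cont.measurable.comp (measurable_pi_apply i))
  have step1 : (∫⁻ x : Fin k → ℝ, ENNReal.ofReal
        (‖g (∑ i, x i)‖ ^ 2 * ∏ i ∈ Finset.univ.erase j, (1 + |x i| ^ α) ^ (-p)))
      = ∫⁻ y : Fin k → ℝ, ENNReal.ofReal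
        (‖g (∑ i, L y i)‖ ^ 2 * ∏ i ∈ Finset.univ.erase j, (1 + |L y i| ^ α) ^ (-p)) := by
    conv_lhs => rw [← hmap]
    rw [lintegral_map hF hLcont.measurable]
  have step2 : ∀ y : Fin k → ℝ, ENNReal.ofReal
      (‖g (∑ i, L y i)‖ ^ 2 * ∏ i ∈ Finset.univ.erase j, (1 + |L y i| ^ α) ^ (-p))
      = ∏ i, φ i (y i) := by
    intro y
    rw [hLsum y]
    have hprod : ∏ i ∈ Finset.univ.erase j, (1 + |L y i| ^ α) ^ (-p)
        = ∏ i ∈ Finset.univ.erase j, h (y i) :=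
      Finset.prod_congr rfl fun i hi => by
        rw [hLapp, if_neg (Finset.mem_erase.mp hi).1]
    rw [hprod, ENNReal.ofReal_mul (by positivity), ENNReal.ofReal_prod_of_nonneg
      (fun i _ => Real.rpow_nonneg (by positivity) _)]
    rw [← Finset.mul_prod_erase Finset.univ (fun i => φ i (y i)) (Finset.mem_univ j)]
    congr 1
    · simp [hφdef]
    · exact Finset.prod_congr rfl fun i hi => by simp [hφdef, hhdef, (Finset.mem_erase.mp hi).1]
  rw [step1]
  simp_rw [step2]
  rw [lintegral_fin_prod φ hφ]
  refine ENNReal.prod_lt_top ?_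
  intro i _
  by_cases hij : i = j
  · have hb2 : ∀ t : ℝ, ‖g t‖ ^ 2 ≤ C ^ 2 * (1 + ‖t‖) ^ (-(2:ℝ)) := by
      intro t
      have h1t : (0:ℝ) < 1 + |t| := by positivity
      have e : (1 + ‖t‖) ^ (-(2:ℝ)) = ((1 + |t|) ^ 2)⁻¹ := by
        rw [Real.norm_eq_abs, Real.rpow_neg h1t.le, show (2:ℝ) = ((2:ℕ):ℝ) by norm_num,
          Real.rpow_natCast]
      rw [e]
      calc ‖g t‖ ^ 2 ≤ (C / (1 + |t|)) ^ 2 := pow_le_pow_left₀ (norm_nonneg _) (hgb t) 2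
        _ = C ^ 2 * ((1 + |t|) ^ 2)⁻¹ := by rw [div_pow]; ring
    calc ∫⁻ t, φ i t = ∫⁻ t, ENNReal.ofReal (‖g t‖ ^ 2) := by simp [hφdef, hij]
      _ ≤ ∫⁻ t, ENNReal.ofReal (C ^ 2 * (1 + ‖t‖) ^ (-(2:ℝ))) :=
          lintegral_mono fun t => ENNReal.ofReal_le_ofReal (hb2 t)
      _ < ⊤ := (integrable_gbound C).lintegral_lt_top
  · have e : (fun t => φ i t) = fun t => ENNReal.ofReal (h t) := by
      funext t; rw [hφdef]; exact if_neg hij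
    rw [e]
    exact h_int.lintegral_lt_top
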